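/- There exists a constant c > 0 such that the following holds. Let 0 < a ≤ 1/2, m > 0, and let ω : ℝ² → ℝ be measurable, bounded, with compact support, odd in each coordinate (ω(−y₁, y₂) = −ω(y₁, y₂) and ω(y₁, −y₂) = −ω(y₁, y₂)), nonnegative on the closed first quadrant {y : y₁ ≥ 0, y₂ ≥ 0}, and satisfying ω(y) ≥ m for every y in the first quadrant with a ≤ |y| ≤ 1 whose polar angle θ = arctan(y₂/y₁) lies in [π/16, π/4]. Then I^s(a) = ∫_{|y| ≥ a} 2·y₁·y₂·ω(y)/|y|⁴ dy ≥ c·m·(−log a). -/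

import Mathlib

open Real MeasureTheory

/-- `vec2 a b` is the point `(a, b)` of the Euclidean plane. -/
noncomputable def vec2 (a b : ℝ) : EuclideanSpace ℝ (Fin 2) :=
  (WithLp.equiv 2 (Fin 2 → ℝ)).symm ![a, b]

/-- `I^s(r) = ∫_{|y|≥r} 2 y₁ y₂ ω(y)/|y|⁴ dy`, the Cartesian form of
`∫_r^∞ ∫_0^{2π} sin(2θ) ω(s,θ)/s dθ ds`. -/
noncomputable def Isin (ω : EuclideanSpace ℝ (Fin 2) → ℝ) (r : ℝ) : ℝ :=
  ∫ y : EuclideanSpace ℝ (Fin 2) in {y | r ≤ ‖y‖},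
    2 * y 0 * y 1 * ω y / ‖y‖ ^ 4

namespace IsinAux

open Set

/-- The identification of the Euclidean plane with `ℝ × ℝ`. -/
noncomputable def e2 : EuclideanSpace ℝ (Fin 2) ≃ᵐ ℝ × ℝ :=
  (MeasurableEquiv.toLp 2 (Fin 2 → ℝ)).symm.trans MeasurableEquiv.finTwoArrow

lemma e2_mp : MeasurePreserving e2 (volume : Measure (EuclideanSpace ℝ (Fin 2))) volume :=
  (MeasureTheory.volume_preserving_finTwoArrow ℝ).comp
    (EuclideanSpace.volume_preserving_symm_measurableEquiv_toLp (Fin 2))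

lemma e2_symm_mk (x y : ℝ) : e2.symm (x, y) = vec2 x y := rfl

lemma e2_fst (v : EuclideanSpace ℝ (Fin 2)) : (e2 v).1 = v 0 := rfl

lemma e2_snd (v : EuclideanSpace ℝ (Fin 2)) : (e2 v).2 = v 1 := rfl

lemma vec2_fst (x y : ℝ) : (vec2 x y) 0 = x := rfl

lemma vec2_snd (x y : ℝ) : (vec2 x y) 1 = y := rfl

/-- The Euclidean norm in coordinates. -/
lemma norm_coords (v : EuclideanSpace ℝ (Fin 2)) :
    ‖v‖ = Real.sqrt ((v 0) ^ 2 + (v 1) ^ 2) := by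
  rw [EuclideanSpace.norm_eq]
  simp [Fin.sum_univ_two, Real.norm_eq_abs, sq_abs]

/-- Euclidean norm viewed on `ℝ × ℝ`. -/
noncomputable def np (p : ℝ × ℝ) : ℝ := Real.sqrt (p.1 ^ 2 + p.2 ^ 2)

lemma np_mk (x y : ℝ) : np (x, y) = Real.sqrt (x ^ 2 + y ^ 2) := rfl

lemma np_nonneg (p : ℝ × ℝ) : 0 ≤ np p := Real.sqrt_nonneg _

lemma np_e2 (v : EuclideanSpace ℝ (Fin 2)) : np (e2 v) = ‖v‖ := by
  rw [norm_coords, np, e2_fst, e2_snd]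

lemma np_symm (p : ℝ × ℝ) : ‖e2.symm p‖ = np p := by
  rw [← np_e2 (e2.symm p), e2.apply_symm_apply]

lemma np_sq (p : ℝ × ℝ) : (np p) ^ 2 = p.1 ^ 2 + p.2 ^ 2 :=
  Real.sq_sqrt (by positivity)

lemma np_pow4 (p : ℝ × ℝ) : (np p) ^ 4 = (p.1 ^ 2 + p.2 ^ 2) ^ 2 := by
  rw [show (4 : ℕ) = 2 * 2 by norm_num, pow_mul, np_sq]

lemma fst_le_np (p : ℝ × ℝ) : |p.1| ≤ np p := by
  rw [np, ← Real.sqrt_sq_eq_abs]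
  exact Real.sqrt_le_sqrt (by nlinarith [sq_nonneg p.2])

lemma snd_le_np (p : ℝ × ℝ) : |p.2| ≤ np p := by
  rw [np, ← Real.sqrt_sq_eq_abs]
  exact Real.sqrt_le_sqrt (by nlinarith [sq_nonneg p.1])

lemma np_neg_fst (x y : ℝ) : np (-x, y) = np (x, y) := by simp [np_mk]

lemma np_neg_snd (x y : ℝ) : np (x, -y) = np (x, y) := by simp [np_mk]

lemma np_continuous : Continuous np :=
  Real.continuous_sqrt.comp ((continuous_fst.pow 2).add (continuous_snd.pow 2))

/-- `π/16 ≤ arctan (1/2)`. -/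
lemma pi_div_sixteen_le_arctan_half : Real.pi / 16 ≤ Real.arctan (1 / 2) := by
  have hpi : Real.pi < 3.15 := Real.pi_lt_d2
  have hpos : (0 : ℝ) < Real.pi := Real.pi_pos
  have h1 : Real.pi / 16 < Real.pi / 2 := by linarith
  have h0 : -(Real.pi / 2) < Real.pi / 16 := by linarith
  have harct : Real.arctan (Real.tan (Real.pi / 16)) = Real.pi / 16 :=
    Real.arctan_tan h0 h1
  rw [← harct]
  apply Real.arctan_strictMono.monotone
  -- tan (π/16) ≤ 1/2
  have hsin : Real.sin (Real.pi / 16) ≤ Real.pi / 16 := Real.sin_le (by positivity)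
  have hcos : (1 : ℝ) / 2 ≤ Real.cos (Real.pi / 16) := by
    have := Real.one_sub_sq_div_two_le_cos (x := Real.pi / 16)
    nlinarith
  have hsin0 : 0 ≤ Real.sin (Real.pi / 16) :=
    Real.sin_nonneg_of_nonneg_of_le_pi (by positivity) (by linarith)
  rw [Real.tan_eq_sin_div_cos]
  have hcos0 : (0 : ℝ) < Real.cos (Real.pi / 16) := by linarith
  rw [div_le_iff₀ hcos0]
  nlinarith

/-- Reflection in the first coordinate preserves volume on `ℝ × ℝ`. -/
lemma mp_reflect1 : MeasurePreserving (fun p : ℝ × ℝ => (-p.1, p.2)) volume volume := by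
  rw [Measure.volume_eq_prod]
  exact (Measure.measurePreserving_neg (volume : Measure ℝ)).prod (MeasurePreserving.id _)

lemma mp_reflect2 : MeasurePreserving (fun p : ℝ × ℝ => (p.1, -p.2)) volume volume := by
  rw [Measure.volume_eq_prod]
  exact (MeasurePreserving.id _).prod (Measure.measurePreserving_neg (volume : Measure ℝ))

lemma emb_reflect1 : MeasurableEmbedding (fun p : ℝ × ℝ => (-p.1, p.2)) :=
  (MeasurableEquiv.prodCongr (Homeomorph.neg ℝ).toMeasurableEquiv
    (MeasurableEquiv.refl ℝ)).measurableEmbedding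

lemma emb_reflect2 : MeasurableEmbedding (fun p : ℝ × ℝ => (p.1, -p.2)) :=
  (MeasurableEquiv.prodCongr (MeasurableEquiv.refl ℝ)
    (Homeomorph.neg ℝ).toMeasurableEquiv).measurableEmbedding

lemma null_fst_zero : volume {p : ℝ × ℝ | p.1 = 0} = 0 := by
  have h : {p : ℝ × ℝ | p.1 = 0} = ({0} : Set ℝ) ×ˢ (Set.univ : Set ℝ) := by
    ext ⟨x, y⟩; simp [eq_comm]
  rw [h, Measure.volume_eq_prod, Measure.prod_prod]
  simp

lemma null_snd_zero : volume {p : ℝ × ℝ | p.2 = 0} = 0 := by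
  have h : {p : ℝ × ℝ | p.2 = 0} = (Set.univ : Set ℝ) ×ˢ ({0} : Set ℝ) := by
    ext ⟨x, y⟩; simp [eq_comm]
  rw [h, Measure.volume_eq_prod, Measure.prod_prod]
  simp

/-- Splitting an integral over a set symmetric under the first-coordinate reflection,
for an even integrand. -/
lemma integral_reflect1 (F : ℝ × ℝ → ℝ) (hF : ∀ x y : ℝ, F (-x, y) = F (x, y))
    (s : Set (ℝ × ℝ)) (hs : MeasurableSet s)
    (hsym : ∀ x y : ℝ, ((-x, y) ∈ s ↔ (x, y) ∈ s))
    (hInt : IntegrableOn F s) :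
    ∫ p in s, F p = 2 * ∫ p in {p ∈ s | 0 < p.1}, F p := by
  have hFp : ∀ p : ℝ × ℝ, F (-p.1, p.2) = F p := fun ⟨x, y⟩ => hF x y
  have hA : MeasurableSet {p : ℝ × ℝ | 0 < p.1} :=
    measurableSet_lt measurable_const measurable_fst
  have hB : MeasurableSet {p : ℝ × ℝ | p.1 < 0} :=
    measurableSet_lt measurable_fst measurable_const
  have hset : (fun p : ℝ × ℝ => (-p.1, p.2)) ⁻¹' {p ∈ s | 0 < p.1}
      = {p ∈ s | p.1 < 0} := by
    ext ⟨x, y⟩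
    simp only [Set.mem_preimage, Set.mem_setOf_eq, Set.mem_sep_iff]
    constructor
    · rintro ⟨h1, h2⟩; exact ⟨(hsym x y).1 h1, by linarith⟩
    · rintro ⟨h1, h2⟩; exact ⟨(hsym x y).2 h1, by linarith⟩
  have key : ∫ p in {p ∈ s | p.1 < 0}, F p = ∫ p in {p ∈ s | 0 < p.1}, F p := by
    have h2 := mp_reflect1.setIntegral_preimage_emb emb_reflect1 F {p ∈ s | 0 < p.1}
    rw [hset] at h2
    rw [← h2]
    exact setIntegral_congr_fun (hset ▸ ((hs.inter hA).preimage emb_reflect1.measurable))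
      (fun p _ => (hFp p).symm)
  have hunion : s =ᵐ[volume]
      (({p ∈ s | p.1 < 0} ∪ {p ∈ s | 0 < p.1}) : Set (ℝ × ℝ)) := by
    apply MeasureTheory.ae_eq_set.2
    constructor
    · apply measure_mono_null _ null_fst_zero
      intro p hp
      simp only [Set.mem_diff, Set.mem_union, Set.mem_sep_iff, not_or, not_and] at hp
      simp only [Set.mem_setOf_eq]
      rcases hp with ⟨hps, h1, h2⟩
      have := h1 hps; have := h2 hps; linarith
    · have : ({p ∈ s | p.1 < 0} ∪ {p ∈ s | 0 < p.1}) \ s = ∅ := by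
        apply Set.diff_eq_empty.2
        rintro p (⟨h, _⟩ | ⟨h, _⟩) <;> exact h
      rw [this]; simp
  have hdisj : Disjoint {p ∈ s | p.1 < 0} {p ∈ s | 0 < p.1} := by
    rw [Set.disjoint_left]
    rintro p ⟨_, h1⟩ ⟨_, h2⟩
    linarith
  rw [setIntegral_congr_set hunion,
    setIntegral_union hdisj (hs.inter hA) (hInt.mono_set (Set.sep_subset _ _))
      (hInt.mono_set (Set.sep_subset _ _)), key]
  ring

lemma integral_reflect2 (F : ℝ × ℝ → ℝ) (hF : ∀ x y : ℝ, F (x, -y) = F (x, y))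
    (s : Set (ℝ × ℝ)) (hs : MeasurableSet s)
    (hsym : ∀ x y : ℝ, ((x, -y) ∈ s ↔ (x, y) ∈ s))
    (hInt : IntegrableOn F s) :
    ∫ p in s, F p = 2 * ∫ p in {p ∈ s | 0 < p.2}, F p := by
  have hFp : ∀ p : ℝ × ℝ, F (p.1, -p.2) = F p := fun ⟨x, y⟩ => hF x y
  have hA : MeasurableSet {p : ℝ × ℝ | 0 < p.2} :=
    measurableSet_lt measurable_const measurable_snd
  have hset : (fun p : ℝ × ℝ => (p.1, -p.2)) ⁻¹' {p ∈ s | 0 < p.2}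
      = {p ∈ s | p.2 < 0} := by
    ext ⟨x, y⟩
    simp only [Set.mem_preimage, Set.mem_setOf_eq, Set.mem_sep_iff]
    constructor
    · rintro ⟨h1, h2⟩; exact ⟨(hsym x y).1 h1, by linarith⟩
    · rintro ⟨h1, h2⟩; exact ⟨(hsym x y).2 h1, by linarith⟩
  have key : ∫ p in {p ∈ s | p.2 < 0}, F p = ∫ p in {p ∈ s | 0 < p.2}, F p := by
    have h2 := mp_reflect2.setIntegral_preimage_emb emb_reflect2 F {p ∈ s | 0 < p.2}
    rw [hset] at h2
    rw [← h2]
    exact setIntegral_congr_fun (hset ▸ ((hs.inter hA).preimage emb_reflect2.measurable))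
      (fun p _ => (hFp p).symm)
  have hunion : s =ᵐ[volume]
      (({p ∈ s | p.2 < 0} ∪ {p ∈ s | 0 < p.2}) : Set (ℝ × ℝ)) := by
    apply MeasureTheory.ae_eq_set.2
    constructor
    · apply measure_mono_null _ null_snd_zero
      intro p hp
      simp only [Set.mem_diff, Set.mem_union, Set.mem_sep_iff, not_or, not_and] at hp
      simp only [Set.mem_setOf_eq]
      rcases hp with ⟨hps, h1, h2⟩
      have := h1 hps; have := h2 hps; linarith
    · have : ({p ∈ s | p.2 < 0} ∪ {p ∈ s | 0 < p.2}) \ s = ∅ := by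
        apply Set.diff_eq_empty.2
        rintro p (⟨h, _⟩ | ⟨h, _⟩) <;> exact h
      rw [this]; simp
  have hdisj : Disjoint {p ∈ s | p.2 < 0} {p ∈ s | 0 < p.2} := by
    rw [Set.disjoint_left]
    rintro p ⟨_, h1⟩ ⟨_, h2⟩
    linarith
  rw [setIntegral_congr_set hunion,
    setIntegral_union hdisj (hs.inter hA) (hInt.mono_set (Set.sep_subset _ _))
      (hInt.mono_set (Set.sep_subset _ _)), key]
  ring

/-- The wedge `{a ≤ x ≤ √a, x/2 ≤ y ≤ x}`. -/
def Tset (a : ℝ) : Set (ℝ × ℝ) :=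
  {p : ℝ × ℝ | a ≤ p.1 ∧ p.1 ≤ Real.sqrt a ∧ p.1 / 2 ≤ p.2 ∧ p.2 ≤ p.1}

lemma Tset_measurable (a : ℝ) : MeasurableSet (Tset a) := by
  apply MeasurableSet.inter (measurableSet_le measurable_const measurable_fst)
  apply MeasurableSet.inter (measurableSet_le measurable_fst measurable_const)
  exact MeasurableSet.inter
    (measurableSet_le (measurable_fst.div_const 2) measurable_snd)
    (measurableSet_le measurable_snd measurable_fst)

lemma Tset_subset_Icc (a : ℝ) (ha : 0 < a) (ha1 : a ≤ 1) :
    Tset a ⊆ Set.Icc ((a : ℝ), a / 2) (1, 1) := by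
  have hsq : Real.sqrt a ≤ 1 := by
    rw [show (1 : ℝ) = Real.sqrt 1 by simp]
    exact Real.sqrt_le_sqrt ha1
  rintro ⟨x, y⟩ ⟨h1, h2, h3, h4⟩
  simp only [Set.mem_Icc, Prod.le_def]
  exact ⟨⟨h1, by linarith⟩, ⟨by linarith, by linarith⟩⟩

lemma Tset_volume_lt_top (a : ℝ) (ha : 0 < a) (ha1 : a ≤ 1) :
    volume (Tset a) < ⊤ :=
  lt_of_le_of_lt (measure_mono (Tset_subset_Icc a ha ha1)) isCompact_Icc.measure_lt_top

lemma integrableOn_G (a c : ℝ) (ha : 0 < a) (ha1 : a ≤ 1) :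
    IntegrableOn (fun p : ℝ × ℝ => c * (p.1 ^ 2)⁻¹) (Tset a) := by
  refine Measure.integrableOn_of_bounded (M := |c| * (a ^ 2)⁻¹)
    (Tset_volume_lt_top a ha ha1).ne
    ((measurable_fst.pow_const 2).inv.const_mul c).aestronglyMeasurable ?_
  · apply (ae_restrict_iff' (Tset_measurable a)).2
    apply Filter.Eventually.of_forall
    rintro ⟨x, y⟩ ⟨h1, _, _, _⟩
    have hx : 0 < x := lt_of_lt_of_le ha h1
    have h2 : (x ^ 2)⁻¹ ≤ (a ^ 2)⁻¹ := by
      apply inv_anti₀ (by positivity)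
      nlinarith
    have h3 : (0:ℝ) < (x ^ 2)⁻¹ := by positivity
    calc ‖c * (x ^ 2)⁻¹‖ = |c| * (x ^ 2)⁻¹ := by
          rw [norm_mul, Real.norm_eq_abs, Real.norm_eq_abs, abs_of_pos h3]
      _ ≤ |c| * (a ^ 2)⁻¹ := by
          apply mul_le_mul_of_nonneg_left h2 (abs_nonneg c)

/-- The key Fubini computation : `∫_{Tset a} c/x² = c (−log a)/4`. -/
lemma integral_Tset (a c : ℝ) (ha : 0 < a) (ha1 : a ≤ 1) :
    ∫ p : ℝ × ℝ in Tset a, c * (p.1 ^ 2)⁻¹ = c * (-Real.log a) / 4 := by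
  set G : ℝ × ℝ → ℝ := fun p => c * (p.1 ^ 2)⁻¹ with hG
  have hTmeas := Tset_measurable a
  have hint : Integrable ((Tset a).indicator G) volume :=
    (integrable_indicator_iff hTmeas).2 (integrableOn_G a c ha ha1)
  have hsqa : a ≤ Real.sqrt a := by
    rw [Real.le_sqrt ha.le ha.le]
    nlinarith
  rw [← MeasureTheory.integral_indicator hTmeas]
  rw [Measure.volume_eq_prod] at hint ⊢
  rw [MeasureTheory.integral_prod _ hint]
  have hinner : ∀ x : ℝ,
      (∫ y : ℝ, (Tset a).indicator G (x, y))
        = Set.indicator (Set.Icc a (Real.sqrt a)) (fun x => c / 2 * x⁻¹) x := by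
    intro x
    by_cases hx : x ∈ Set.Icc a (Real.sqrt a)
    · have hx0 : 0 < x := lt_of_lt_of_le ha hx.1
      have hfun : (fun y : ℝ => (Tset a).indicator G (x, y))
          = Set.indicator (Set.Icc (x / 2) x) (fun _ => c * (x ^ 2)⁻¹) := by
        funext y
        by_cases hy : y ∈ Set.Icc (x / 2) x
        · rw [Set.indicator_of_mem hy,
            Set.indicator_of_mem (show ((x : ℝ), y) ∈ Tset a from
              ⟨hx.1, hx.2, hy.1, hy.2⟩)]
        · rw [Set.indicator_of_notMem hy, Set.indicator_of_notMem]
          rintro ⟨_, _, h3, h4⟩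
          exact hy ⟨h3, h4⟩
      rw [hfun, MeasureTheory.integral_indicator_const _ measurableSet_Icc,
        Real.volume_real_Icc_of_le (by linarith), Set.indicator_of_mem hx, smul_eq_mul]
      field_simp
      ring
    · rw [Set.indicator_of_notMem hx]
      have hfun : (fun y : ℝ => (Tset a).indicator G (x, y)) = fun _ => (0 : ℝ) := by
        funext y
        apply Set.indicator_of_notMem
        rintro ⟨h1, h2, _, _⟩
        exact hx ⟨h1, h2⟩
      rw [hfun]
      simp
  simp only [hinner]
  open intervalIntegral in
  rw [MeasureTheory.integral_indicator measurableSet_Icc,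
    MeasureTheory.integral_Icc_eq_integral_Ioc,
    ← intervalIntegral.integral_of_le hsqa,
    intervalIntegral.integral_const_mul,
    integral_inv_of_pos ha (Real.sqrt_pos.2 ha),
    Real.log_div (Real.sqrt_ne_zero'.2 ha) (ne_of_gt ha), Real.log_sqrt ha.le]
  ring

end IsinAux

open IsinAux Set

set_option maxHeartbeats 2000000 in
/-- Section 5: lower bound for the key integral `I^s`. For a bounded, compactly supported
vorticity, odd in each Cartesian variable, nonnegative on the first quadrant, and bounded
below by `m` on the first-quadrant annulus `a ≤ |y| ≤ 1` within angles `[π/16, π/4]`,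
one has `I^s(a) ≥ c·m·(−log a)` for a universal constant `c > 0`. -/
theorem Isin_lower_bound :
    ∃ c : ℝ, 0 < c ∧ ∀ a m : ℝ, 0 < a → a ≤ 1/2 → 0 < m →
      ∀ ω : EuclideanSpace ℝ (Fin 2) → ℝ, Measurable ω →
        (∃ M : ℝ, ∀ y, |ω y| ≤ M) → HasCompactSupport ω →
        (∀ s t : ℝ, ω (vec2 (-s) t) = -ω (vec2 s t)) →
        (∀ s t : ℝ, ω (vec2 s (-t)) = -ω (vec2 s t)) →
        (∀ y : EuclideanSpace ℝ (Fin 2), 0 ≤ y 0 → 0 ≤ y 1 → 0 ≤ ω y) →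
        (∀ y : EuclideanSpace ℝ (Fin 2), 0 ≤ y 0 → 0 ≤ y 1 →
          a ≤ ‖y‖ → ‖y‖ ≤ 1 →
          Real.arctan (y 1 / y 0) ∈ Set.Icc (Real.pi / 16) (Real.pi / 4) →
          m ≤ ω y) →
        c * m * (-Real.log a) ≤ Isin ω a := by
  refine ⟨1/4, by norm_num, ?_⟩
  intro a m ha ha2 hm0 ω hmeasω hbdd hsupp hodd1 hodd2 hpos hm
  obtain ⟨M, hMb⟩ := hbdd
  have hM0 : 0 ≤ M := (abs_nonneg _).trans (hMb 0)
  set F : ℝ × ℝ → ℝ := fun p => 2 * p.1 * p.2 * ω (e2.symm p) / (np p) ^ 4 with hF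
  set S : Set (ℝ × ℝ) := {p | a ≤ np p} with hS
  have hSmeas : MeasurableSet S :=
    measurableSet_le measurable_const np_continuous.measurable
  have hFmeas : Measurable F := by
    apply Measurable.div
    · exact ((measurable_const.mul measurable_fst).mul measurable_snd).mul
        (hmeasω.comp e2.symm.measurable)
    · exact (np_continuous.measurable).pow_const 4
  -- Step 0 : transfer to ℝ × ℝ
  have hIsin : Isin ω a = ∫ p in S, F p := by
    have hpre : e2 ⁻¹' S = {y : EuclideanSpace ℝ (Fin 2) | a ≤ ‖y‖} := by
      ext v
      simp only [Set.mem_preimage, hS, Set.mem_setOf_eq, np_e2]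
    have h := e2_mp.setIntegral_preimage_emb e2.measurableEmbedding F S
    rw [hpre] at h
    rw [Isin, ← h]
    apply setIntegral_congr_fun (hpre ▸ hSmeas.preimage e2.measurable)
    intro v _
    show 2 * v 0 * v 1 * ω v / ‖v‖ ^ 4 = F (e2 v)
    rw [hF]
    simp only
    rw [e2_fst, e2_snd, e2.symm_apply_apply, np_e2]
  -- Integrability on S
  obtain ⟨R, hR⟩ :=
    (hsupp.isBounded).subset_closedBall (0 : EuclideanSpace ℝ (Fin 2))
  have hω_zero : ∀ p : ℝ × ℝ, R < np p → ω (e2.symm p) = 0 := by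
    intro p hp
    apply image_eq_zero_of_notMem_tsupport
    intro hmem
    have := hR hmem
    rw [Metric.mem_closedBall, dist_zero_right, np_symm] at this
    linarith
  have hFabs : ∀ p : ℝ × ℝ, a ≤ np p → |F p| ≤ M / a ^ 2 := by
    rintro ⟨x, y⟩ hp
    have hnp : 0 < np (x, y) := lt_of_lt_of_le ha hp
    have hnp2 : (np (x, y)) ^ 2 = x ^ 2 + y ^ 2 := np_sq _
    have hnp4 : (np (x, y)) ^ 4 = (x ^ 2 + y ^ 2) ^ 2 := np_pow4 _
    have h2xy : |2 * x * y| ≤ x ^ 2 + y ^ 2 := by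
      rw [abs_le]
      constructor <;> nlinarith [sq_nonneg (x + y), sq_nonneg (x - y)]
    have hωb := hMb (e2.symm (x, y))
    have hden : (0:ℝ) < (x ^ 2 + y ^ 2) := by nlinarith
    have hnum : |2 * x * y * ω (e2.symm (x, y))| ≤ (x ^ 2 + y ^ 2) * M := by
      rw [abs_mul]
      exact mul_le_mul h2xy hωb (abs_nonneg _) hden.le
    have ha2np : a ^ 2 ≤ x ^ 2 + y ^ 2 := by nlinarith
    show |2 * x * y * ω (e2.symm (x, y)) / (np (x, y)) ^ 4| ≤ M / a ^ 2
    rw [abs_div, abs_of_pos (pow_pos hnp 4), hnp4,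
      div_le_div_iff₀ (by positivity) (by positivity)]
    calc |2 * x * y * ω (e2.symm (x, y))| * a ^ 2
        ≤ ((x ^ 2 + y ^ 2) * M) * (x ^ 2 + y ^ 2) :=
          mul_le_mul hnum ha2np (by positivity) (by positivity)
      _ = M * (x ^ 2 + y ^ 2) ^ 2 := by ring
  have hIntS : IntegrableOn F S := by
    apply Integrable.mono'
      (g := Set.indicator {p : ℝ × ℝ | np p ≤ R} (fun _ => M / a ^ 2))
    · rw [integrable_indicator_iff
        (measurableSet_le np_continuous.measurable measurable_const)]
      refine integrableOn_const (lt_top_iff_ne_top.1 ?_)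
      have hsub : {p : ℝ × ℝ | np p ≤ R} ⊆ Metric.closedBall (0 : ℝ × ℝ) R := by
        intro p hp
        rw [Metric.mem_closedBall, dist_zero_right, Prod.norm_def,
          Real.norm_eq_abs, Real.norm_eq_abs]
        exact max_le ((fst_le_np p).trans hp) ((snd_le_np p).trans hp)
      calc (volume.restrict S) {p : ℝ × ℝ | np p ≤ R}
          ≤ volume {p : ℝ × ℝ | np p ≤ R} := Measure.restrict_apply_le _ _
        _ ≤ volume (Metric.closedBall (0 : ℝ × ℝ) R) := measure_mono hsub
        _ < ⊤ := measure_closedBall_lt_top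
    · exact (hFmeas.aestronglyMeasurable).restrict
    · apply (ae_restrict_iff' hSmeas).2
      apply Filter.Eventually.of_forall
      intro p hp
      by_cases hpR : np p ≤ R
      · rw [Set.indicator_of_mem (show p ∈ {p : ℝ × ℝ | np p ≤ R} from hpR)]
        exact hFabs p hp
      · rw [Set.indicator_of_notMem (show p ∉ {p : ℝ × ℝ | np p ≤ R} from hpR)]
        have : ω (e2.symm p) = 0 := hω_zero p (by linarith [not_le.1 hpR])
        show |F p| ≤ 0
        rw [hF]
        simp only
        rw [this]
        simp
  -- symmetry of F and S
  have hFs1 : ∀ x y : ℝ, F (-x, y) = F (x, y) := by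
    intro x y
    show 2 * (-x) * y * ω (e2.symm (-x, y)) / (np (-x, y)) ^ 4
      = 2 * x * y * ω (e2.symm (x, y)) / (np (x, y)) ^ 4
    rw [e2_symm_mk, e2_symm_mk, hodd1, np_neg_fst]
    ring
  have hFs2 : ∀ x y : ℝ, F (x, -y) = F (x, y) := by
    intro x y
    show 2 * x * (-y) * ω (e2.symm (x, -y)) / (np (x, -y)) ^ 4
      = 2 * x * y * ω (e2.symm (x, y)) / (np (x, y)) ^ 4
    rw [e2_symm_mk, e2_symm_mk, hodd2, np_neg_snd]
    ring
  have hSsym1 : ∀ x y : ℝ, ((-x, y) ∈ S ↔ (x, y) ∈ S) := by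
    intro x y; simp only [hS, Set.mem_setOf_eq, np_neg_fst]
  have hstep1 := integral_reflect1 F hFs1 S hSmeas hSsym1 hIntS
  set S1 : Set (ℝ × ℝ) := {p ∈ S | 0 < p.1} with hS1
  have hS1meas : MeasurableSet S1 :=
    hSmeas.inter (measurableSet_lt measurable_const measurable_fst)
  have hS1sub : S1 ⊆ S := Set.sep_subset _ _
  have hS1sym : ∀ x y : ℝ, ((x, -y) ∈ S1 ↔ (x, y) ∈ S1) := by
    intro x y
    simp only [hS1, hS, Set.mem_sep_iff, Set.mem_setOf_eq, np_neg_snd]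
  have hstep2 := integral_reflect2 F hFs2 S1 hS1meas hS1sym (hIntS.mono_set hS1sub)
  set Q : Set (ℝ × ℝ) := {p ∈ S1 | 0 < p.2} with hQ
  have hQsub : Q ⊆ S1 := Set.sep_subset _ _
  have hQmeas : MeasurableSet Q :=
    hS1meas.inter (measurableSet_lt measurable_const measurable_snd)
  have hFnonneg : ∀ p ∈ Q, 0 ≤ F p := by
    rintro ⟨x, y⟩ ⟨⟨hpS, hx⟩, hy⟩
    have h0 : (e2.symm (x, y)) 0 = x := by rw [e2_symm_mk, vec2_fst]
    have h1 : (e2.symm (x, y)) 1 = y := by rw [e2_symm_mk, vec2_snd]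
    have hω : 0 ≤ ω (e2.symm (x, y)) :=
      hpos _ (by rw [h0]; exact hx.le) (by rw [h1]; exact hy.le)
    show 0 ≤ 2 * x * y * ω (e2.symm (x, y)) / (np (x, y)) ^ 4
    apply div_nonneg _ (by positivity)
    exact mul_nonneg (mul_nonneg (by linarith) hy.le) hω
  have hTQ : Tset a ⊆ Q := by
    rintro ⟨x, y⟩ ⟨ha1', ha2', ha3', ha4'⟩
    have h1 : a ≤ x := ha1'
    have h3 : x / 2 ≤ y := ha3'
    have hx : 0 < x := lt_of_lt_of_le ha h1
    refine ⟨⟨?_, hx⟩, by linarith⟩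
    show a ≤ np (x, y)
    calc a ≤ x := h1
      _ = |x| := (abs_of_pos hx).symm
      _ ≤ np (x, y) := fst_le_np (x, y)
  have hIntQ : IntegrableOn F Q := hIntS.mono_set (hQsub.trans hS1sub)
  have hmono1 : ∫ p in Tset a, F p ≤ ∫ p in Q, F p := by
    apply setIntegral_mono_set hIntQ
    · exact (ae_restrict_iff' hQmeas).2 (Filter.Eventually.of_forall hFnonneg)
    · exact HasSubset.Subset.eventuallyLE hTQ
  have hpoint : ∀ p ∈ Tset a, m / 4 * (p.1 ^ 2)⁻¹ ≤ F p := by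
    rintro ⟨x, y⟩ ⟨ha1', ha2', ha3', ha4'⟩
    have h1 : a ≤ x := ha1'
    have h2 : x ≤ Real.sqrt a := ha2'
    have h3 : x / 2 ≤ y := ha3'
    have h4 : y ≤ x := ha4'
    have hx : 0 < x := lt_of_lt_of_le ha h1
    have hy : 0 < y := by linarith
    have h0 : (e2.symm (x, y)) 0 = x := by rw [e2_symm_mk, vec2_fst]
    have h1' : (e2.symm (x, y)) 1 = y := by rw [e2_symm_mk, vec2_snd]
    have hnorm : ‖e2.symm (x, y)‖ = np (x, y) := np_symm _
    have hnp2 : (np (x, y)) ^ 2 = x ^ 2 + y ^ 2 := np_sq _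
    have hnp0 : 0 ≤ np (x, y) := np_nonneg _
    have hxa : x ^ 2 ≤ a := by
      have h := Real.sq_sqrt ha.le
      nlinarith [Real.sqrt_nonneg a]
    have hnple : np (x, y) ≤ 1 := by
      rw [np_mk, show (1:ℝ) = Real.sqrt 1 by simp]
      apply Real.sqrt_le_sqrt
      nlinarith
    have hnpge : a ≤ np (x, y) :=
      le_trans h1 (le_trans (le_abs_self x) (fst_le_np (x, y)))
    have hdiv1 : y / x ≤ 1 := by rw [div_le_one hx]; exact h4
    have hdiv2 : (1:ℝ)/2 ≤ y / x := by rw [le_div_iff₀ hx]; linarith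
    have harc : Real.arctan (y / x) ∈ Set.Icc (Real.pi/16) (Real.pi/4) := by
      constructor
      · exact le_trans pi_div_sixteen_le_arctan_half
          (Real.arctan_strictMono.monotone hdiv2)
      · calc Real.arctan (y/x) ≤ Real.arctan 1 :=
              Real.arctan_strictMono.monotone hdiv1
          _ = Real.pi/4 := Real.arctan_one
    have hW : m ≤ ω (e2.symm (x, y)) := by
      apply hm
      · rw [h0]; exact hx.le
      · rw [h1']; exact hy.le
      · rw [hnorm]; exact hnpge
      · rw [hnorm]; exact hnple
      · rw [h0, h1']; exact harc
    show m / 4 * (x ^ 2)⁻¹ ≤ 2 * x * y * ω (e2.symm (x, y)) / (np (x, y)) ^ 4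
    have hnp4 : (np (x, y)) ^ 4 = (x ^ 2 + y ^ 2) ^ 2 := np_pow4 _
    have hnp4pos : 0 < (np (x, y)) ^ 4 := by rw [hnp4]; positivity
    rw [show m / 4 * (x ^ 2)⁻¹ = m / (4 * x ^ 2) by ring,
      div_le_div_iff₀ (by positivity) hnp4pos, hnp4]
    have hy2 : y ^ 2 ≤ x ^ 2 := by nlinarith
    have hA : (x ^ 2 + y ^ 2) ^ 2 ≤ 4 * x ^ 4 := by
      nlinarith [mul_le_mul_of_nonneg_left hy2 (by positivity : (0:ℝ) ≤ x ^ 2 + y ^ 2),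
        mul_le_mul_of_nonneg_right (show x ^ 2 + y ^ 2 ≤ 2 * x ^ 2 by linarith) (sq_nonneg x)]
    have hB : x ^ 2 ≤ 2 * x * y := by
      nlinarith [mul_le_mul_of_nonneg_left h3 hx.le]
    have hC : m * (4 * x ^ 4) ≤ (2 * x * y) * (4 * x ^ 2) * m := by
      nlinarith [mul_le_mul_of_nonneg_right hB (by positivity : (0:ℝ) ≤ 4 * x ^ 2 * m)]
    nlinarith [mul_le_mul_of_nonneg_left hA hm0.le, hC,
      mul_le_mul_of_nonneg_left hW (by positivity : (0:ℝ) ≤ 2 * x * y * (4 * x ^ 2))]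
  have hIntT : IntegrableOn F (Tset a) := hIntQ.mono_set hTQ
  have ha1 : a ≤ 1 := by linarith
  have hmono2 : ∫ p in Tset a, (m / 4) * (p.1 ^ 2)⁻¹ ≤ ∫ p in Tset a, F p :=
    setIntegral_mono_on (integrableOn_G a (m/4) ha ha1) hIntT (Tset_measurable a) hpoint
  have hval : ∫ p : ℝ × ℝ in Tset a, (m/4) * (p.1 ^ 2)⁻¹ = (m/4) * (-Real.log a) / 4 :=
    integral_Tset a (m/4) ha ha1
  have hQint : (m/4) * (-Real.log a) / 4 ≤ ∫ p in Q, F p := by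
    rw [← hval]
    exact le_trans hmono2 hmono1
  rw [hIsin, hstep1, hstep2]
  nlinarith [hQint]
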